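/- A connected signed graph admits a nowhere-zero 2-flow if and only if it is Eulerian (every vertex has even degree) and the number of its negative edges is even. -/

import Mathlib

open Finset

/-- A signed multigraph on vertex type `V` with edge type `E`:
each edge has an ordered pair of endpoints and a sign (`neg e = true` means negative). -/
structure SignedMultigraph (V E : Type) where
  ends : E → V × V
  neg : E → Bool

namespace SignedMultigraph

variable {V E : Type} [Fintype V] [Fintype E] [DecidableEq V] [DecidableEq E]

/-- Degree of `v` in the edge subset `F` (loops count twice). -/
def degIn (G : SignedMultigraph V E) (F : Finset E) (v : V) : ℕ :=
  ∑ e ∈ F, ((if (G.ends e).1 = v then 1 else 0) + (if (G.ends e).2 = v then 1 else 0))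

/-- Adjacency via an edge of `F`. -/
def adj (G : SignedMultigraph V E) (F : Finset E) (v w : V) : Prop :=
  ∃ e ∈ F, G.ends e = (v, w) ∨ G.ends e = (w, v)

/-- Vertices incident with an edge of `F`. -/
def supp (G : SignedMultigraph V E) (F : Finset E) : Set V :=
  {v | ∃ e ∈ F, (G.ends e).1 = v ∨ (G.ends e).2 = v}

/-- Reachability using edges of `F`. -/
def reach (G : SignedMultigraph V E) (F : Finset E) : V → V → Prop :=
  Relation.ReflTransGen (G.adj F)

/-- `F` is (the edge set of) a circuit: nonempty, every vertex has degree 0 or 2,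
and the support is connected. -/
def IsCircuit (G : SignedMultigraph V E) (F : Finset E) : Prop :=
  F.Nonempty ∧ (∀ v, G.degIn F v = 0 ∨ G.degIn F v = 2) ∧
    ∀ v ∈ G.supp F, ∀ w ∈ G.supp F, G.reach F v w

/-- The negative edges inside `F`. -/
def negEdges (G : SignedMultigraph V E) (F : Finset E) : Finset E :=
  F.filter (fun e => G.neg e = true)

def IsBalancedCircuit (G : SignedMultigraph V E) (F : Finset E) : Prop :=
  G.IsCircuit F ∧ Even (G.negEdges F).card

def IsUnbalancedCircuit (G : SignedMultigraph V E) (F : Finset E) : Prop :=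
  G.IsCircuit F ∧ Odd (G.negEdges F).card

/-- A signed graph is balanced if every circuit has an even number of negative edges. -/
def Balanced (G : SignedMultigraph V E) : Prop :=
  ∀ F : Finset E, G.IsCircuit F → Even (G.negEdges F).card

/-- `P` is the edge set of a path from `v₁` to `v₂` (trivial iff `v₁ = v₂`). -/
def IsPathBetween (G : SignedMultigraph V E) (P : Finset E) (v₁ v₂ : V) : Prop :=
  if v₁ = v₂ then P = ∅ else
    G.degIn P v₁ = 1 ∧ G.degIn P v₂ = 1 ∧
    (∀ v, v ≠ v₁ → v ≠ v₂ → G.degIn P v = 0 ∨ G.degIn P v = 2) ∧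
    ∀ v ∈ G.supp P, ∀ w ∈ G.supp P, G.reach P v w

/-- `F` is a barbell: two unbalanced circuits joined by a (possibly trivial) path. -/
def IsBarbell (G : SignedMultigraph V E) (F : Finset E) : Prop :=
  ∃ (C₁ C₂ P : Finset E) (v₁ v₂ : V),
    G.IsUnbalancedCircuit C₁ ∧ G.IsUnbalancedCircuit C₂ ∧
    G.IsPathBetween P v₁ v₂ ∧ v₁ ∈ G.supp C₁ ∧ v₂ ∈ G.supp C₂ ∧
    F = C₁ ∪ C₂ ∪ P ∧
    (G.supp C₁ \ {v₁}) ∩ G.supp (C₂ ∪ P) = ∅ ∧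
    (G.supp C₂ \ {v₂}) ∩ G.supp (C₁ ∪ P) = ∅

/-- A signed circuit is a balanced circuit or a barbell. -/
def IsSignedCircuit (G : SignedMultigraph V E) (F : Finset E) : Prop :=
  G.IsBalancedCircuit F ∨ G.IsBarbell F

/-- A bidirection `d` assigns to each half-edge a direction (`true` = toward its endpoint);
it is an orientation of the signed graph if negative edges are exactly the
extroverted/introverted ones. -/
def IsOrientation (G : SignedMultigraph V E) (d : E → Bool × Bool) : Prop :=
  ∀ e, G.neg e = true ↔ (d e).1 = (d e).2

/-- Net inflow at vertex `v` (incoming half-edges count `+φ e`, outgoing `-φ e`). -/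
def vertexSum {Γ : Type} [AddCommGroup Γ] (G : SignedMultigraph V E)
    (d : E → Bool × Bool) (φ : E → Γ) (v : V) : Γ :=
  ∑ e, ((if (G.ends e).1 = v then (if (d e).1 then φ e else -φ e) else 0) +
        (if (G.ends e).2 = v then (if (d e).2 then φ e else -φ e) else 0))

/-- `(d, φ)` is a flow: `d` is an orientation and Kirchhoff's law holds at every vertex. -/
def IsFlow {Γ : Type} [AddCommGroup Γ] (G : SignedMultigraph V E)
    (d : E → Bool × Bool) (φ : E → Γ) : Prop :=
  G.IsOrientation d ∧ ∀ v, G.vertexSum d φ v = 0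

/-- Nowhere-zero `Γ`-flow. -/
def HasNZGroupFlow (G : SignedMultigraph V E) (Γ : Type) [AddCommGroup Γ] : Prop :=
  ∃ (d : E → Bool × Bool) (φ : E → Γ), G.IsFlow d φ ∧ ∀ e, φ e ≠ 0

/-- Flow-admissible: has a nowhere-zero integer flow. -/
def FlowAdmissible (G : SignedMultigraph V E) : Prop :=
  ∃ (d : E → Bool × Bool) (φ : E → ℤ), G.IsFlow d φ ∧ ∀ e, φ e ≠ 0

/-- Nowhere-zero `k`-flow: integer flow with `0 < |φ e| < k`. -/
def HasNZkFlow (G : SignedMultigraph V E) (k : ℤ) : Prop :=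
  ∃ (d : E → Bool × Bool) (φ : E → ℤ), G.IsFlow d φ ∧ ∀ e, 0 < |φ e| ∧ |φ e| < k

/-- The flow number: least `k : ℕ` admitting a nowhere-zero `k`-flow. -/
noncomputable def flowNum (G : SignedMultigraph V E) : ℕ :=
  sInf {k : ℕ | G.HasNZkFlow (k : ℤ)}

/-- Circular `t`-flow: real flow with `1 ≤ |φ e| ≤ t - 1`. -/
def HasCircularFlow (G : SignedMultigraph V E) (t : ℝ) : Prop :=
  ∃ (d : E → Bool × Bool) (φ : E → ℝ), G.IsFlow d φ ∧ ∀ e, 1 ≤ |φ e| ∧ |φ e| ≤ t - 1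

/-- The circular flow number. -/
noncomputable def circFlowNum (G : SignedMultigraph V E) : ℝ :=
  sInf {t : ℝ | G.HasCircularFlow t}

/-- Bridgeless: the endpoints of each edge are joined by a path avoiding that edge. -/
def Bridgeless (G : SignedMultigraph V E) : Prop :=
  ∀ e : E, G.reach (Finset.univ.erase e) (G.ends e).1 (G.ends e).2

/-- Switching at a vertex `v`. -/
def switch (G : SignedMultigraph V E) (v : V) : SignedMultigraph V E where
  ends := G.ends
  neg := fun e => xor (G.neg e) (xor (decide ((G.ends e).1 = v)) (decide ((G.ends e).2 = v)))

/-- Switching equivalence of signed graphs on the same underlying graph. -/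
def Equivalent (G₁ G₂ : SignedMultigraph V E) : Prop :=
  Relation.ReflTransGen (fun H₁ H₂ => ∃ v : V, H₂ = H₁.switch v) G₁ G₂

/-- Antibalanced: switching-equivalent to an all-negative signed graph. -/
def Antibalanced (G : SignedMultigraph V E) : Prop :=
  ∃ G' : SignedMultigraph V E, G.Equivalent G' ∧ ∀ e, G'.neg e = true

/-- No vertex of the support of `S` is a source or a sink of `d` restricted to `S`. -/
def NoSourceSink (G : SignedMultigraph V E) (d : E → Bool × Bool) (S : Finset E) : Prop :=
  ∀ v ∈ G.supp S,
    (∃ e ∈ S, ((G.ends e).1 = v ∧ (d e).1 = true) ∨ ((G.ends e).2 = v ∧ (d e).2 = true)) ∧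
    (∃ e ∈ S, ((G.ends e).1 = v ∧ (d e).1 = false) ∨ ((G.ends e).2 = v ∧ (d e).2 = false))

/-- Zero-sum `k`-flow on the underlying (unsigned) graph. -/
def ZeroSumFlow (G : SignedMultigraph V E) (k : ℤ) : Prop :=
  ∃ f : E → ℤ, (∀ e, 1 ≤ |f e| ∧ |f e| ≤ k - 1) ∧
    ∀ v : V, (∑ e, ((if (G.ends e).1 = v then f e else 0) +
                    (if (G.ends e).2 = v then f e else 0))) = 0

end SignedMultigraph
namespace NZ2Aux
open SignedMultigraph Finset

variable {V E : Type} [Fintype V] [Fintype E] [DecidableEq V] [DecidableEq E]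

/-- Source of a step. -/
def src (G : SignedMultigraph V E) (s : E × Bool) : V :=
  if s.2 then (G.ends s.1).1 else (G.ends s.1).2

/-- Destination of a step. -/
def dst (G : SignedMultigraph V E) (s : E × Bool) : V :=
  if s.2 then (G.ends s.1).2 else (G.ends s.1).1

/-- A trail: list of steps with distinct edges, consecutive endpoints matching. -/
inductive IsTrail (G : SignedMultigraph V E) : List (E × Bool) → V → V → Prop
  | nil (v : V) : IsTrail G [] v v
  | cons (s : E × Bool) (L : List (E × Bool)) (w : V)
      (h1 : IsTrail G L (dst G s) w) (h2 : s.1 ∉ L.map Prod.fst) :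
      IsTrail G (s :: L) (src G s) w

theorem IsTrail.nodup {G : SignedMultigraph V E} {L u w} (h : IsTrail G L u w) :
    (L.map Prod.fst).Nodup := by
  induction h with
  | nil => simp
  | cons s L w h1 h2 ih => simpa [h2] using ih

theorem IsTrail.append {G : SignedMultigraph V E} {L₁ L₂ u w x}
    (h1 : IsTrail G L₁ u w) (h2 : IsTrail G L₂ w x)
    (hd : ∀ e ∈ L₁.map Prod.fst, e ∉ L₂.map Prod.fst) :
    IsTrail G (L₁ ++ L₂) u x := by
  induction h1 with
  | nil => simpa using h2
  | cons s L w' ht hs ih =>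
    have := ih h2 (fun e he => hd e (by simp [he]))
    exact IsTrail.cons s (L ++ L₂) x (by simpa using this)
      (by simp only [List.map_append, List.mem_append]
          push_neg
          exact ⟨hs, hd s.1 (by simp)⟩)

theorem IsTrail.single (G : SignedMultigraph V E) (s : E × Bool) :
    IsTrail G [s] (src G s) (dst G s) :=
  IsTrail.cons s [] _ (IsTrail.nil _) (by simp)

/-- incidence count of an edge at a vertex -/
def inc (G : SignedMultigraph V E) (e : E) (v : V) : ℕ :=
  (if (G.ends e).1 = v then 1 else 0) + (if (G.ends e).2 = v then 1 else 0)

def edgeF (L : List (E × Bool)) : Finset E := (L.map Prod.fst).toFinset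

theorem degIn_eq_sum_inc (G : SignedMultigraph V E) (F : Finset E) (v : V) :
    G.degIn F v = ∑ e ∈ F, inc G e v := rfl

theorem degIn_edgeF {G : SignedMultigraph V E} {L : List (E × Bool)}
    (h : (L.map Prod.fst).Nodup) (v : V) :
    G.degIn (edgeF L) v = (L.map (fun s => inc G s.1 v)).sum := by
  rw [degIn_eq_sum_inc, edgeF, List.sum_toFinset _ h]
  simp [List.map_map, Function.comp_def]

theorem inc_src_dst (G : SignedMultigraph V E) (s : E × Bool) (v : V) :
    inc G s.1 v = (if src G s = v then 1 else 0) + (if dst G s = v then 1 else 0) := by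
  rcases s with ⟨e, b⟩
  cases b <;> simp [inc, src, dst, add_comm]

/-- parity of trail degrees -/
theorem IsTrail.deg_parity {G : SignedMultigraph V E} {L u w} (h : IsTrail G L u w) (v : V) :
    (G.degIn (edgeF L) v : ZMod 2) =
      (if u = v then 1 else 0) + (if w = v then 1 else 0) := by
  induction h with
  | nil v' =>
    simp only [edgeF, List.map_nil, List.toFinset_nil, degIn, Finset.sum_empty, Nat.cast_zero]
    split_ifs <;> decide
  | cons s L w ht hs ih =>
    rw [degIn_edgeF (IsTrail.cons s L w ht hs).nodup]
    rw [degIn_edgeF ht.nodup] at ih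
    rw [List.map_cons, List.sum_cons, Nat.cast_add, ih, inc_src_dst]
    push_cast
    split_ifs <;> decide
theorem IsTrail.src_step {G : SignedMultigraph V E} {L u w} (h : IsTrail G L u w)
    {s} (hs : s ∈ L) : src G s = u ∨ ∃ s' ∈ L, dst G s' = src G s := by
  induction h with
  | nil v => simp at hs
  | cons t L w ht h2 ih =>
    rcases List.mem_cons.1 hs with rfl | hs'
    · exact Or.inl rfl
    · rcases ih hs' with h | ⟨s', hs', he⟩
      · exact Or.inr ⟨t, by simp, h.symm⟩
      · exact Or.inr ⟨s', by simp [hs'], he⟩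

theorem IsTrail.split {G : SignedMultigraph V E} {L u x} (h : IsTrail G L u x) (w : V)
    (hw : w = u ∨ ∃ s ∈ L, w = dst G s) :
    ∃ L₁ L₂, L = L₁ ++ L₂ ∧ IsTrail G L₁ u w ∧ IsTrail G L₂ w x := by
  induction h with
  | nil v =>
    rcases hw with rfl | ⟨s, hs, _⟩
    · exact ⟨[], [], rfl, IsTrail.nil _, IsTrail.nil _⟩
    · simp at hs
  | cons t L x ht h2 ih =>
    by_cases hwu : w = src G t
    · exact ⟨[], t :: L, rfl, hwu ▸ IsTrail.nil w, hwu ▸ IsTrail.cons t L x ht h2⟩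
    · have hw' : w = dst G t ∨ ∃ s ∈ L, w = dst G s := by
        rcases hw with h | ⟨s, hs, he⟩
        · exact absurd h hwu
        · rcases List.mem_cons.1 hs with rfl | hs'
          · exact Or.inl he
          · exact Or.inr ⟨s, hs', he⟩
      rcases ih hw' with ⟨L₁, L₂, rfl, hL₁, hL₂⟩
      refine ⟨t :: L₁, L₂, rfl, IsTrail.cons t L₁ w hL₁ ?_, hL₂⟩
      intro hmem
      exact h2 (by simpa using Or.inl hmem)

theorem IsTrail.mem_supp {G : SignedMultigraph V E} {L u x w} (h : IsTrail G L u x)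
    (hw : w ∈ G.supp (edgeF L)) : w = u ∨ ∃ s ∈ L, w = dst G s := by
  rcases hw with ⟨e, he, hend⟩
  rcases List.mem_map.1 (List.mem_toFinset.1 he) with ⟨s, hs, rfl⟩
  have : w = src G s ∨ w = dst G s := by
    rcases s with ⟨e, b⟩
    cases b <;> simp only [src, dst, if_true, if_false] <;> tauto
  rcases this with rfl | hd
  · rcases h.src_step hs with h' | ⟨s', hs', he'⟩
    · exact Or.inl h'
    · exact Or.inr ⟨s', hs', he'.symm⟩
  · exact Or.inr ⟨s, hs, hd⟩

theorem IsTrail.rotate {G : SignedMultigraph V E} {L v} (h : IsTrail G L v v) (w : V)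
    (hw : w = v ∨ ∃ s ∈ L, w = dst G s) :
    ∃ M, IsTrail G M w w ∧ edgeF M = edgeF L := by
  rcases h.split w hw with ⟨L₁, L₂, hL, h1, h2⟩
  have hn := h.nodup
  rw [hL, List.map_append, List.nodup_append] at hn
  refine ⟨L₂ ++ L₁, h2.append h1 (fun e he2 he1 => hn.2.2 e he1 e he2 rfl), ?_⟩
  rw [hL]
  simp [edgeF, List.toFinset_append, Finset.union_comm]
theorem even_iff_zmod {n : ℕ} : Even n ↔ (n : ZMod 2) = 0 := by
  exact ZMod.natCast_eq_zero_iff_even.symm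

theorem degIn_sdiff {G : SignedMultigraph V E} {S F : Finset E} (h : S ⊆ F) (v : V) :
    G.degIn F v = G.degIn S v + G.degIn (F \ S) v := by
  rw [degIn_eq_sum_inc, degIn_eq_sum_inc, degIn_eq_sum_inc, add_comm]
  exact (Finset.sum_sdiff h).symm

theorem IsTrail.closed_even {G : SignedMultigraph V E} {L v} (h : IsTrail G L v v) (x : V) :
    Even (G.degIn (edgeF L) x) := by
  rw [even_iff_zmod, h.deg_parity x]
  split_ifs <;> decide

theorem IsTrail.open_odd {G : SignedMultigraph V E} {L u w} (h : IsTrail G L u w)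
    (hne : u ≠ w) : ¬ Even (G.degIn (edgeF L) w) := by
  rw [even_iff_zmod, h.deg_parity w, if_neg hne, if_pos rfl]
  decide

/-- choose a step entering an edge from a given endpoint -/
theorem exists_step {G : SignedMultigraph V E} {e : E} {w : V}
    (h : (G.ends e).1 = w ∨ (G.ends e).2 = w) : ∃ b, src G (e, b) = w := by
  rcases h with h | h
  · exact ⟨true, h⟩
  · exact ⟨false, h⟩

/-- a trail inside an even-degree edge set can be closed up -/
theorem close_trail {G : SignedMultigraph V E} {F : Finset E}
    (he : ∀ v, Even (G.degIn F v)) :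
    ∀ n (L : List (E × Bool)) u w, IsTrail G L u w → edgeF L ⊆ F →
      (F \ edgeF L).card ≤ n →
      ∃ M, IsTrail G (L ++ M) u u ∧ edgeF (L ++ M) ⊆ F := by
  intro n
  induction n with
  | zero =>
    intro L u w h hsub hcard
    -- F \ edgeF L = ∅, so degIn (F \ edgeF L) w = 0; if u ≠ w contradiction
    by_cases huw : u = w
    · exact ⟨[], by simpa using huw ▸ h, by simpa using hsub⟩
    · exfalso
      have hF : F \ edgeF L = ∅ := Finset.card_eq_zero.1 (Nat.le_zero.1 hcard)
      have : G.degIn F w = G.degIn (edgeF L) w := by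
        rw [degIn_sdiff hsub w, hF]
        simp [degIn]
      exact (h.open_odd huw) (this ▸ he w)
  | succ n ih =>
    intro L u w h hsub hcard
    by_cases huw : u = w
    · exact ⟨[], by simpa using huw ▸ h, by simpa using hsub⟩
    · -- find an unused edge at w
      have hodd := h.open_odd huw
      have hex : ∃ e ∈ F \ edgeF L, (G.ends e).1 = w ∨ (G.ends e).2 = w := by
        by_contra hno
        push_neg at hno
        have hz : G.degIn (F \ edgeF L) w = 0 := by
          rw [degIn_eq_sum_inc]
          refine Finset.sum_eq_zero fun e hme => ?_
          have := hno e hme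
          simp [inc, this.1, this.2]
        have : G.degIn F w = G.degIn (edgeF L) w := by
          rw [degIn_sdiff hsub w, hz, add_zero]
        exact hodd (this ▸ he w)
      rcases hex with ⟨e, hme, hend⟩
      rcases exists_step hend with ⟨b, hb⟩
      have hnotin : e ∉ edgeF L := (Finset.mem_sdiff.1 hme).2
      have htr : IsTrail G (L ++ [(e, b)]) u (dst G (e, b)) := by
        refine h.append (hb ▸ IsTrail.single G (e, b)) ?_
        intro e' he' hee
        simp only [List.map_cons, List.map_nil, List.mem_singleton] at hee
        exact hnotin (hee ▸ (by simpa [edgeF] using he'))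
      have hsub' : edgeF (L ++ [(e, b)]) ⊆ F := by
        intro e' he'
        simp only [edgeF, List.map_append, List.toFinset_append, Finset.mem_union] at he'
        rcases he' with h' | h'
        · exact hsub h'
        · simp only [List.map_cons, List.map_nil, List.toFinset_cons, List.toFinset_nil,
            LawfulSingleton.insert_empty_eq, Finset.mem_singleton] at h'
          exact h' ▸ (Finset.mem_sdiff.1 hme).1
      have hcard' : (F \ edgeF (L ++ [(e, b)])).card ≤ n := by
        have hss : F \ edgeF (L ++ [(e, b)]) ⊂ F \ edgeF L := by
          constructor
          · intro x hx
            rcases Finset.mem_sdiff.1 hx with ⟨h1, h2⟩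
            refine Finset.mem_sdiff.2 ⟨h1, fun hc => h2 ?_⟩
            simp only [edgeF, List.map_append, List.toFinset_append, Finset.mem_union]
            exact Or.inl hc
          · intro hc
            have : e ∈ F \ edgeF (L ++ [(e, b)]) := hc hme
            rcases Finset.mem_sdiff.1 this with ⟨_, h2⟩
            exact h2 (by simp [edgeF])
        exact Nat.lt_succ_iff.1 (lt_of_lt_of_le (Finset.card_lt_card hss) hcard)
      rcases ih (L ++ [(e, b)]) u (dst G (e, b)) htr hsub' hcard' with ⟨M, hM, hMsub⟩
      exact ⟨(e, b) :: M, by simpa using hM, by simpa using hMsub⟩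
theorem grow {G : SignedMultigraph V E} (heven : ∀ v, Even (G.degIn Finset.univ v))
    (hconn : ∀ v w : V, G.reach Finset.univ v w) :
    ∀ n (L : List (E × Bool)) (v : V), IsTrail G L v v → L ≠ [] →
      ((Finset.univ : Finset E) \ edgeF L).card ≤ n →
      ∃ (w : V) (M : List (E × Bool)), IsTrail G M w w ∧ ∀ e : E, e ∈ edgeF M := by
  intro n
  induction n with
  | zero =>
    intro L v h _ hcard
    refine ⟨v, L, h, fun e => ?_⟩
    have : (Finset.univ : Finset E) \ edgeF L = ∅ := Finset.card_eq_zero.1 (Nat.le_zero.1 hcard)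
    by_contra hc
    have : e ∈ (Finset.univ : Finset E) \ edgeF L := Finset.mem_sdiff.2 ⟨Finset.mem_univ e, hc⟩
    rw [‹_ \ _ = ∅›] at this
    exact absurd this (Finset.notMem_empty e)
  | succ n ih =>
    intro L v h hne hcard
    by_cases hall : ∀ e : E, e ∈ edgeF L
    · exact ⟨v, L, h, hall⟩
    · push_neg at hall
      rcases hall with ⟨e', he'⟩
      -- crossing argument: find x on the trail (or = v) with an unused incident edge
      have hcross : ∃ x, (x = v ∨ ∃ s ∈ L, x = dst G s) ∧
          ∃ e, e ∉ edgeF L ∧ ((G.ends e).1 = x ∨ (G.ends e).2 = x) := by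
        set B : V → Prop := fun y => ∃ e, e ∉ edgeF L ∧ ((G.ends e).1 = y ∨ (G.ends e).2 = y)
        have key : ∀ y, G.reach Finset.univ y v → B y →
            ∃ x, (x = v ∨ ∃ s ∈ L, x = dst G s) ∧ B x := by
          intro y hy
          induction hy using Relation.ReflTransGen.head_induction_on with
          | refl => exact fun hb => ⟨v, Or.inl rfl, hb⟩
          | head hadj _ ih2 =>
            rename_i a c _
            intro hBa
            rcases hadj with ⟨f, _, hf⟩
            by_cases hfL : f ∈ edgeF L
            · refine ⟨a, ?_, hBa⟩
              refine h.mem_supp ⟨f, hfL, ?_⟩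
              rcases hf with hf | hf <;> rw [hf] <;> simp
            · refine ih2 ⟨f, hfL, ?_⟩
              rcases hf with hf | hf <;> rw [hf] <;> simp
        exact key (G.ends e').1 (hconn _ v) ⟨e', he', Or.inl rfl⟩
      rcases hcross with ⟨x, hxA, e, heL, hend⟩
      rcases h.rotate x hxA with ⟨M₀, hM₀, hEq⟩
      have heM₀ : e ∉ edgeF M₀ := hEq ▸ heL
      have hM₀ne : M₀ ≠ [] := by
        intro hnil
        rcases List.exists_mem_of_ne_nil L hne with ⟨s, hs⟩
        have : s.1 ∈ edgeF L := List.mem_toFinset.2 (List.mem_map.2 ⟨s, hs, rfl⟩)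
        rw [← hEq, hnil] at this
        simp [edgeF] at this
      -- the complement of M₀'s edges has all degrees even
      have heven' : ∀ w, Even (G.degIn (Finset.univ \ edgeF M₀) w) := by
        intro w
        have h1 := degIn_sdiff (G := G) (Finset.subset_univ (edgeF M₀)) w
        rcases hM₀.closed_even w with ⟨a, ha⟩
        rcases heven w with ⟨c, hc⟩
        exact ⟨c - a, by omega⟩
      rcases exists_step hend with ⟨b, hb⟩
      have hstart : IsTrail G [(e, b)] x (dst G (e, b)) := hb ▸ IsTrail.single G (e, b)
      have hsub0 : edgeF [(e, b)] ⊆ Finset.univ \ edgeF M₀ := by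
        intro e'' he''
        simp only [edgeF, List.map_cons, List.map_nil, List.toFinset_cons, List.toFinset_nil,
          LawfulSingleton.insert_empty_eq, Finset.mem_singleton] at he''
        exact Finset.mem_sdiff.2 ⟨Finset.mem_univ _, he'' ▸ heM₀⟩
      rcases close_trail heven' _ [(e, b)] x (dst G (e, b)) hstart hsub0 le_rfl
        with ⟨M₁, hM₁, hM₁sub⟩
      -- concatenate M₀ and the new closed trail
      have hdisj : ∀ e'' ∈ M₀.map Prod.fst, e'' ∉ ((e, b) :: M₁).map Prod.fst := by
        intro e'' h1 h2
        have hi : e'' ∈ edgeF ((e, b) :: M₁) := by simpa [edgeF] using h2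
        have := hM₁sub (by simpa using hi)
        exact (Finset.mem_sdiff.1 this).2 (by simpa [edgeF] using h1)
      have hnew : IsTrail G (M₀ ++ ((e, b) :: M₁)) x x :=
        hM₀.append (by simpa using hM₁) hdisj
      have hmore : ((Finset.univ : Finset E) \ edgeF (M₀ ++ ((e, b) :: M₁))).card ≤ n := by
        have hss : (Finset.univ : Finset E) \ edgeF (M₀ ++ ((e, b) :: M₁)) ⊂
            Finset.univ \ edgeF L := by
          constructor
          · intro y hy
            rcases Finset.mem_sdiff.1 hy with ⟨h1, h2⟩
            refine Finset.mem_sdiff.2 ⟨h1, fun hc => h2 ?_⟩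
            have hc' : y ∈ edgeF M₀ := hEq.symm ▸ hc
            simp only [edgeF, List.map_append, List.toFinset_append, Finset.mem_union]
            exact Or.inl hc'
          · intro hc
            have : e ∈ (Finset.univ : Finset E) \ edgeF (M₀ ++ ((e, b) :: M₁)) :=
              hc (Finset.mem_sdiff.2 ⟨Finset.mem_univ _, heL⟩)
            rcases Finset.mem_sdiff.1 this with ⟨_, h2⟩
            exact h2 (by simp [edgeF])
        exact Nat.lt_succ_iff.1 (lt_of_lt_of_le (Finset.card_lt_card hss) hcard)
      exact ih (M₀ ++ ((e, b) :: M₁)) x hnew (by simp) hmore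

theorem euler {G : SignedMultigraph V E} (heven : ∀ v, Even (G.degIn Finset.univ v))
    (hconn : ∀ v w : V, G.reach Finset.univ v w) (hE : Nonempty E) :
    ∃ (w : V) (M : List (E × Bool)), IsTrail G M w w ∧ ∀ e : E, e ∈ edgeF M := by
  obtain ⟨e₀⟩ := hE
  have h0 : IsTrail G [(e₀, true)] (src G (e₀, true)) (dst G (e₀, true)) :=
    IsTrail.single G (e₀, true)
  rcases close_trail heven _ [(e₀, true)] _ _ h0 (Finset.subset_univ _) le_rfl
    with ⟨M, hM, _⟩
  exact grow heven hconn _ _ _ hM (by simp) le_rfl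
def val (b : Bool) : ℤ := if b then 1 else -1

theorem val_not (b : Bool) : val (!b) = -val b := by cases b <;> simp [val]

def nextSt (G : SignedMultigraph V E) (s : E × Bool) (st : Bool) : Bool :=
  if G.neg s.1 then !st else st

def stateAfter (G : SignedMultigraph V E) : List (E × Bool) → Bool → Bool
  | [], st => st
  | s :: L, st => stateAfter G L (nextSt G s st)

/-- arrival half value of a step entered with state `st` -/
def aval (G : SignedMultigraph V E) (s : E × Bool) (st : Bool) : Bool :=
  if G.neg s.1 then st else !st

theorem nextSt_eq_not_aval (G : SignedMultigraph V E) (s : E × Bool) (st : Bool) :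
    nextSt G s st = !(aval G s st) := by
  simp only [nextSt, aval]
  split_ifs <;> simp

def assign (G : SignedMultigraph V E) : List (E × Bool) → Bool → (E → Bool × Bool) →
    (E → Bool × Bool)
  | [], _, d0 => d0
  | s :: L, st, d0 =>
    Function.update (assign G L (nextSt G s st) d0) s.1
      (if s.2 then (st, aval G s st) else (aval G s st, st))

def contrib (G : SignedMultigraph V E) (d : E → Bool × Bool) (e : E) (v : V) : ℤ :=
  (if (G.ends e).1 = v then val (d e).1 else 0) +
  (if (G.ends e).2 = v then val (d e).2 else 0)

theorem contrib_of_pair (G : SignedMultigraph V E) (d : E → Bool × Bool) (s : E × Bool)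
    (ds as : Bool) (hd : d s.1 = if s.2 then (ds, as) else (as, ds)) (v : V) :
    contrib G d s.1 v = (if src G s = v then val ds else 0) +
      (if dst G s = v then val as else 0) := by
  rcases s with ⟨e, b⟩
  cases b <;> simp only [if_true, if_false] at hd <;>
    simp [contrib, src, dst, hd, add_comm]

theorem assign_orient (G : SignedMultigraph V E) :
    ∀ (L : List (E × Bool)) (st : Bool) (d0 : E → Bool × Bool) (e : E),
      e ∈ L.map Prod.fst →
      (G.neg e = true ↔ (assign G L st d0 e).1 = (assign G L st d0 e).2) := by
  intro L
  induction L with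
  | nil => intro st d0 e he; simp at he
  | cons s L ih =>
    intro st d0 e he
    by_cases hes : e = s.1
    · obtain ⟨e', b⟩ := s
      have hes' : e = e' := hes
      subst hes'
      simp only [assign, Function.update_self]
      rcases hneg : G.neg e with _ | _ <;> cases b <;> cases st <;>
        simp [aval, hneg]
    · have he' : e ∈ L.map Prod.fst := by
        rw [List.map_cons] at he
        rcases List.mem_cons.1 he with h | h
        · exact absurd h hes
        · exact h
      simp only [assign, Function.update_of_ne hes]
      exact ih (nextSt G s st) d0 e he'

theorem psum_eq (G : SignedMultigraph V E) {L : List (E × Bool)} {u w : V}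
    (h : IsTrail G L u w) :
    ∀ (st : Bool) (d0 : E → Bool × Bool) (v : V), L ≠ [] →
      (L.map (fun s => contrib G (assign G L st d0) s.1 v)).sum =
        (if u = v then val st else 0) -
        (if w = v then val (stateAfter G L st) else 0) := by
  induction h with
  | nil v' => intro st d0 v hne; simp at hne
  | cons s L w ht hs ih =>
    intro st d0 v _
    have hd : assign G (s :: L) st d0 s.1 = if s.2 then (st, aval G s st)
        else (aval G s st, st) := by
      simp [assign]
    have htail : ∀ s' ∈ L, contrib G (assign G (s :: L) st d0) s'.1 v =
        contrib G (assign G L (nextSt G s st) d0) s'.1 v := by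
      intro s' hs'
      have : s'.1 ≠ s.1 := fun hc => hs (hc ▸ List.mem_map.2 ⟨s', hs', rfl⟩)
      simp [assign, contrib, Function.update_of_ne this]
    rw [List.map_cons, List.sum_cons, List.map_congr_left htail,
      contrib_of_pair G _ s st (aval G s st) hd v]
    rcases List.eq_nil_or_concat L with rfl | hLne
    · -- L = [], so w = dst s
      cases ht
      simp only [List.map_nil, List.sum_nil, add_zero]
      have : stateAfter G [s] st = nextSt G s st := rfl
      rw [show stateAfter G (s :: ([] : List (E × Bool))) st = nextSt G s st from rfl,
        nextSt_eq_not_aval, val_not]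
      split_ifs <;> ring
    · have hLne' : L ≠ [] := by rcases hLne with ⟨L', s', rfl⟩; simp
      rw [ih (nextSt G s st) d0 v hLne']
      rw [show stateAfter G (s :: L) st = stateAfter G L (nextSt G s st) from rfl]
      rw [nextSt_eq_not_aval, val_not]
      split_ifs <;> ring

theorem stateAfter_eq (G : SignedMultigraph V E) :
    ∀ (L : List (E × Bool)) (st : Bool),
      stateAfter G L st = if Even (L.countP (fun s => G.neg s.1)) then st else !st := by
  intro L
  induction L with
  | nil => intro st; simp [stateAfter]
  | cons s L ih =>
    intro st
    rcases hneg : G.neg s.1 with _ | _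
    · have : (s :: L).countP (fun s => G.neg s.1) = L.countP (fun s => G.neg s.1) := by
        rw [List.countP_cons]
        simp [hneg]
      rw [this, show stateAfter G (s :: L) st = stateAfter G L (nextSt G s st) from rfl,
        nextSt, hneg]
      simp only [if_false, Bool.false_eq_true]
      exact ih st
    · have : (s :: L).countP (fun s => G.neg s.1) = L.countP (fun s => G.neg s.1) + 1 := by
        rw [List.countP_cons]
        simp [hneg]
      rw [this, show stateAfter G (s :: L) st = stateAfter G L (nextSt G s st) from rfl,
        nextSt, hneg, if_pos rfl, ih (!st)]
      by_cases hp : Even (L.countP (fun s => G.neg s.1)) <;>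
        simp [hp, Nat.even_add_one]
theorem sum_edgeF {β : Type} [AddCommMonoid β] {L : List (E × Bool)}
    (hn : (L.map Prod.fst).Nodup) (f : E → β) :
    ∑ e ∈ edgeF L, f e = (L.map (fun s => f s.1)).sum := by
  rw [edgeF, List.sum_toFinset _ hn]
  simp [List.map_map, Function.comp_def]

theorem count_negEdges (G : SignedMultigraph V E) {L : List (E × Bool)}
    (hn : (L.map Prod.fst).Nodup) (hall : ∀ e : E, e ∈ edgeF L) :
    (G.negEdges Finset.univ).card = L.countP (fun s => G.neg s.1) := by
  have huniv : (Finset.univ : Finset E) = edgeF L := by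
    ext e; simp [hall e]
  rw [negEdges, huniv, edgeF, ← List.toFinset_filter,
    List.toFinset_card_of_nodup (hn.filter _), ← List.countP_eq_length_filter,
    List.countP_map]
  rfl

theorem backward (G : SignedMultigraph V E)
    (hconn : ∀ v w : V, G.reach Finset.univ v w)
    (heven : ∀ v : V, Even (G.degIn Finset.univ v))
    (hneg : Even (G.negEdges Finset.univ).card) : G.HasNZkFlow 2 := by
  by_cases hE : Nonempty E
  · obtain ⟨w, L, hL, hall⟩ := euler heven hconn hE
    have hLne : L ≠ [] := by
      rintro rfl
      obtain ⟨e⟩ := hE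
      simpa [edgeF] using hall e
    set d := assign G L true (fun _ => (true, true)) with hd
    refine ⟨d, fun _ => 1, ⟨?_, ?_⟩, ?_⟩
    · intro e
      exact assign_orient G L true _ e (by simpa [edgeF] using hall e)
    · intro v
      have hsum : G.vertexSum d (fun _ => (1:ℤ)) v = ∑ e, contrib G d e v := by
        refine Finset.sum_congr rfl fun e _ => ?_
        rcases h1 : (d e).1 with _ | _ <;> rcases h2 : (d e).2 with _ | _ <;>
          simp [contrib, val, h1, h2]
      have huniv : (Finset.univ : Finset E) = edgeF L := by
        ext e; simp [hall e]
      rw [hsum, huniv, sum_edgeF hL.nodup, psum_eq G hL true _ v hLne]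
      have hstate : stateAfter G L true = true := by
        rw [stateAfter_eq]
        have : Even (L.countP (fun s => G.neg s.1)) := by
          rw [← count_negEdges G hL.nodup hall]; exact hneg
        simp [this]
      rw [hstate]
      split_ifs <;> ring
    · intro e
      norm_num
  · have : IsEmpty E := not_nonempty_iff.1 hE
    refine ⟨fun _ => (true, true), fun _ => 1, ⟨fun e => isEmptyElim e, ?_⟩,
      fun e => isEmptyElim e⟩
    intro v
    simp [vertexSum, Finset.univ_eq_empty]

theorem forward (G : SignedMultigraph V E) (h : G.HasNZkFlow 2) :
    (∀ v : V, Even (G.degIn Finset.univ v)) ∧ Even (G.negEdges Finset.univ).card := by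
  obtain ⟨d, φ, ⟨hor, hker⟩, hbnd⟩ := h
  have habs : ∀ e, φ e = 1 ∨ φ e = -1 := by
    intro e
    have h1 := (hbnd e).1
    have h2 := (hbnd e).2
    rcases abs_cases (φ e) with ⟨ha, _⟩ | ⟨ha, _⟩ <;> omega
  have hcast : ∀ e, ((φ e : ℤ) : ZMod 2) = 1 := by
    intro e
    rcases habs e with h | h <;> rw [h] <;> decide
  constructor
  · intro v
    rw [← ZMod.natCast_eq_zero_iff_even]
    have h0 : ((G.vertexSum d φ v : ℤ) : ZMod 2) = 0 := by rw [hker v]; rfl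
    rw [← h0, vertexSum, degIn_eq_sum_inc]
    push_cast
    refine Finset.sum_congr rfl fun e _ => ?_
    by_cases h1 : (G.ends e).1 = v <;> by_cases h2 : (G.ends e).2 = v <;>
      cases hd1 : (d e).1 <;> cases hd2 : (d e).2 <;>
        simp [inc, h1, h2, hd1, hd2, hcast e] <;> decide
  · -- sum over all vertices
    have collapse : ∀ e : E,
        ∑ v : V, ((if (G.ends e).1 = v then (if (d e).1 then φ e else -φ e) else 0) +
          (if (G.ends e).2 = v then (if (d e).2 then φ e else -φ e) else 0)) =
        (if (d e).1 then φ e else -φ e) + (if (d e).2 then φ e else -φ e) := by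
      intro e
      rw [Finset.sum_add_distrib, Finset.sum_ite_eq, Finset.sum_ite_eq]
      simp
    have h0 : ∑ e : E, ((if (d e).1 then φ e else -φ e) +
        (if (d e).2 then φ e else -φ e)) = 0 := by
      have hs : ∑ v : V, G.vertexSum d φ v = 0 := by simp [hker]
      simp only [vertexSum] at hs
      rw [Finset.sum_comm] at hs
      rw [← hs]
      exact Finset.sum_congr rfl fun e _ => (collapse e).symm
    have hpos : ∑ e ∈ Finset.univ.filter (fun e => ¬ G.neg e = true),
        ((if (d e).1 then φ e else -φ e) + (if (d e).2 then φ e else -φ e)) = 0 := by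
      refine Finset.sum_eq_zero fun e he => ?_
      have hne : ¬ ((d e).1 = (d e).2) := fun hc =>
        (Finset.mem_filter.1 he).2 ((hor e).2 hc)
      rcases hd1 : (d e).1 with _ | _ <;> rcases hd2 : (d e).2 with _ | _ <;>
        rw [hd1, hd2] at hne <;> simp_all <;> ring
    have hsplit := Finset.sum_filter_add_sum_filter_not Finset.univ
      (fun e => G.neg e = true)
      (fun e => ((if (d e).1 then φ e else -φ e) + (if (d e).2 then φ e else -φ e)))
    have hnegsum : ∑ e ∈ G.negEdges Finset.univ,
        ((if (d e).1 then φ e else -φ e) + (if (d e).2 then φ e else -φ e)) = 0 := by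
      have : G.negEdges Finset.univ = Finset.univ.filter (fun e => G.neg e = true) := rfl
      rw [this]
      linarith [hsplit, hpos, h0]
    have hpsi : ∑ e ∈ G.negEdges Finset.univ, (if (d e).1 then φ e else -φ e) = 0 := by
      have h2 : (2:ℤ) * ∑ e ∈ G.negEdges Finset.univ,
          (if (d e).1 then φ e else -φ e) = 0 := by
        rw [Finset.mul_sum, ← hnegsum]
        refine Finset.sum_congr rfl fun e he => ?_
        have hde : (d e).1 = (d e).2 := (hor e).1 (Finset.mem_filter.1 he).2
        rw [← hde]
        ring
      linarith
    rw [← ZMod.natCast_eq_zero_iff_even]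
    calc ((G.negEdges Finset.univ).card : ZMod 2)
        = ∑ _e ∈ G.negEdges Finset.univ, (1 : ZMod 2) := by simp
      _ = ∑ e ∈ G.negEdges Finset.univ,
            (((if (d e).1 then φ e else -φ e) : ℤ) : ZMod 2) := by
          refine Finset.sum_congr rfl fun e _ => ?_
          rcases hd1 : (d e).1 with _ | _
          · rw [if_neg (by simp [hd1]), Int.cast_neg, hcast e]
            decide
          · rw [if_pos (by simp [hd1]), hcast e]
      _ = ((∑ e ∈ G.negEdges Finset.univ,
            (if (d e).1 then φ e else -φ e) : ℤ) : ZMod 2) := by push_cast; rfl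
      _ = 0 := by rw [hpsi]; rfl
end NZ2Aux

open SignedMultigraph in
/-- A connected signed graph has a nowhere-zero 2-flow iff it is Eulerian with an even
number of negative edges. -/
theorem stmt_6 {V E : Type} [Fintype V] [Fintype E] [DecidableEq V] [DecidableEq E]
    (G : SignedMultigraph V E) (hconn : ∀ v w : V, G.reach Finset.univ v w) :
    G.HasNZkFlow 2 ↔
      (∀ v : V, Even (G.degIn Finset.univ v)) ∧ Even (G.negEdges Finset.univ).card := by
  constructor
  · exact NZ2Aux.forward G
  · intro ⟨h1, h2⟩
    exact NZ2Aux.backward G hconn h1 h2
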